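/- Let N be a positive integer, let Σ₀, S ∈ ℂ^{N×N} be Hermitian, let a ∈ ℂ^N, and let t₀ ∈ ℝ be such that Σ := Σ₀ + t₀·(a aᴴ) is positive definite. Define ℓ(t) := Re(trace((Σ₀ + t·(a aᴴ))⁻¹ * S)) + Real.log (Re(det(Σ₀ + t·(a aᴴ)))). Then ℓ has derivative Re(−aᴴ Σ⁻¹ S Σ⁻¹ a + aᴴ Σ⁻¹ a) at t₀. -/

import Mathlib

open Matrix
open Filter Topology
open scoped ComplexOrder

section helpers
variable {n : Type*} [Fintype n]

lemma vecMulVec_mul' (u v : n → ℂ) (M : Matrix n n ℂ) :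
    vecMulVec u v * M = vecMulVec u (v ᵥ* M) := by
  ext i j
  simp [vecMulVec_apply, mul_apply, vecMul, dotProduct, Finset.mul_sum, mul_assoc]

lemma smul_vecMulVec' (s : ℂ) (u v : n → ℂ) :
    s • vecMulVec u v = vecMulVec (s • u) v := by
  ext i j; simp [vecMulVec_apply, mul_assoc]

lemma trace_mul_vecMulVec' (B : Matrix n n ℂ) (u v : n → ℂ) :
    trace (B * vecMulVec u v) = v ⬝ᵥ (B *ᵥ u) := by
  simp only [trace, mul_apply, vecMulVec_apply, diag, dotProduct, mulVec, Finset.mul_sum]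
  exact Finset.sum_congr rfl fun i _ => Finset.sum_congr rfl fun j _ => by ring

lemma vecMulVec_mul_vecMulVec' (u v w z : n → ℂ) :
    vecMulVec u v * vecMulVec w z = (v ⬝ᵥ w) • vecMulVec u z := by
  ext i j
  simp only [vecMulVec_apply, mul_apply, dotProduct, Finset.sum_mul, Matrix.smul_apply, smul_eq_mul]
  exact Finset.sum_congr rfl fun k _ => by ring

lemma row_mul_mul_col' (v u : n → ℂ) (M : Matrix n n ℂ) (i j : Unit) :
    (replicateRow Unit v * M * replicateCol Unit u) i j = v ⬝ᵥ (M *ᵥ u) := by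
  simp only [mul_apply, replicateRow_apply, replicateCol_apply, dotProduct, mulVec, Finset.sum_mul,
    Finset.mul_sum]
  rw [Finset.sum_comm]
  exact Finset.sum_congr rfl fun k _ => Finset.sum_congr rfl fun l _ => by ring

end helpers

/-- The likelihood-equation derivative (eq. (11) of the paper): the negative Gaussian
log-likelihood `ℓ(t) = Re tr((Σ₀ + t a aᴴ)⁻¹ S) + log Re det(Σ₀ + t a aᴴ)` has derivative
`Re(−aᴴ Σ⁻¹ S Σ⁻¹ a + aᴴ Σ⁻¹ a)` at `t₀`, where `Σ = Σ₀ + t₀ a aᴴ`. -/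
theorem stmt_10 (N : ℕ) (hN : 0 < N)
    (Sig0 S : Matrix (Fin N) (Fin N) ℂ)
    (hSig0 : Sig0.IsHermitian) (hS : S.IsHermitian)
    (a : Fin N → ℂ) (t₀ : ℝ)
    (hpd : (Sig0 + (t₀ : ℂ) • vecMulVec a (star a)).PosDef) :
    HasDerivAt (fun t : ℝ =>
        (Matrix.trace ((Sig0 + (t : ℂ) • vecMulVec a (star a))⁻¹ * S)).re
          + Real.log ((Sig0 + (t : ℂ) • vecMulVec a (star a)).det.re))
      ((-(star a ⬝ᵥ (((Sig0 + (t₀ : ℂ) • vecMulVec a (star a))⁻¹ * S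
            * (Sig0 + (t₀ : ℂ) • vecMulVec a (star a))⁻¹) *ᵥ a))
          + star a ⬝ᵥ ((Sig0 + (t₀ : ℂ) • vecMulVec a (star a))⁻¹ *ᵥ a)).re) t₀ := by
  classical
  set A := vecMulVec a (star a) with hA
  set Sg := Sig0 + (t₀ : ℂ) • A with hSg
  have hH : Sg.IsHermitian := hpd.isHermitian
  have hdetU : IsUnit Sg.det := (Matrix.isUnit_iff_isUnit_det _).mp hpd.isUnit
  set M := Sg⁻¹ with hM
  have hMH : M.IsHermitian := hH.inv
  have hMul : Sg * M = 1 := mul_nonsing_inv _ hdetU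
  set c : ℂ := star a ⬝ᵥ (M *ᵥ a) with hc
  set d : ℂ := star a ⬝ᵥ ((M * S * M) *ᵥ a) with hd
  set cr := c.re with hcrdef
  -- c is real
  have hstar : star c = c := by
    have h1 : star c = star (M *ᵥ a) ⬝ᵥ a := by
      rw [hc, show (star a ⬝ᵥ (M *ᵥ a)) = star (star (M *ᵥ a) ⬝ᵥ a) from star_dotProduct _ _,
        star_star]
    rw [h1, star_mulVec, hMH.eq, ← dotProduct_mulVec]
  have hcr : (cr : ℂ) = c := by
    have := Complex.conj_eq_iff_re.mp hstar
    rw [hcrdef, this]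
  -- det is a positive real
  have hdp : (0 : ℂ) < Sg.det := hpd.det_pos
  have hdre : 0 < Sg.det.re := (Complex.lt_def.mp hdp).1
  have hdim : Sg.det = ((Sg.det.re : ℝ) : ℂ) := by
    have := (Complex.lt_def.mp hdp).2
    exact Complex.ext rfl (by simp [← this])
  set K := Sg.det.re with hK
  -- A * M * A = c • A
  have hAMA : A * M * A = c • A := by
    rw [hA, vecMulVec_mul', vecMulVec_mul_vecMulVec', ← dotProduct_mulVec, ← hc]
  -- inverse formula
  have hinv : ∀ s : ℂ, 1 + s * c ≠ 0 →
      (Sg + s • A)⁻¹ = M - (s / (1 + s * c)) • (M * A * M) := by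
    intro s hs
    apply inv_eq_right_inv
    set q := s / (1 + s * c) with hq
    have hqq : q * (1 + s * c) = s := div_mul_cancel₀ _ hs
    have h2 : Sg * (M * A * M) = A * M := by
      rw [← Matrix.mul_assoc, ← Matrix.mul_assoc, hMul, Matrix.one_mul]
    have h3 : A * (M * A * M) = c • (A * M) := by
      rw [← Matrix.mul_assoc, ← Matrix.mul_assoc, hAMA, Matrix.smul_mul]
    have expand : (Sg + s • A) * (M - q • (M * A * M)) =
        Sg * M - q • (Sg * (M * A * M)) + (s • (A * M) - (q * s) • (A * (M * A * M))) := by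
      rw [add_mul, mul_sub, mul_sub, Matrix.mul_smul, Matrix.mul_smul,
        Matrix.smul_mul, Matrix.smul_mul, smul_smul]
    rw [expand, hMul, h2, h3, smul_smul]
    have hs2 : q * s * c = s - q := by linear_combination hqq
    rw [hs2, sub_smul]
    abel
  -- determinant formula
  have hdetf : ∀ s : ℂ, (Sg + s • A).det = Sg.det * (1 + s * c) := by
    intro s
    rw [hA, smul_vecMulVec', vecMulVec_eq Unit, det_add_replicateCol_mul_replicateRow hdetU]
    congr 1
    rw [det_unique, Matrix.add_apply, Matrix.one_apply_eq, row_mul_mul_col',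
      mulVec_smul, dotProduct_smul, ← hM, ← hc, smul_eq_mul]
  -- trace formula
  have htrd : trace (M * A * M * S) = d := by
    rw [Matrix.mul_assoc (M * A) M S, trace_mul_comm, ← Matrix.mul_assoc]
    exact trace_mul_vecMulVec' (M * S * M) a (star a)
  set dr := d.re with hdrdef
  -- eventual positivity of the denominator
  have hev : ∀ᶠ t in 𝓝 t₀, 0 < 1 + (t - t₀) * cr := by
    have hop : IsOpen {t : ℝ | 0 < 1 + (t - t₀) * cr} :=
      isOpen_lt continuous_const (by fun_prop)
    exact hop.mem_nhds (by simp)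
  -- representation of the path through Sg
  have hrepr : ∀ t : ℝ, Sig0 + (t : ℂ) • A = Sg + (((t - t₀ : ℝ) : ℂ)) • A := by
    intro t
    have hcast : (t₀ : ℂ) + ((t - t₀ : ℝ) : ℂ) = (t : ℂ) := by push_cast; ring
    rw [hSg, add_assoc, ← add_smul, hcast]
  -- local explicit formula
  have heq : (fun t : ℝ => (trace ((Sig0 + (t : ℂ) • A)⁻¹ * S)).re
        + Real.log ((Sig0 + (t : ℂ) • A).det.re))
      =ᶠ[𝓝 t₀] fun t : ℝ =>
        (trace (M * S)).re - ((t - t₀) / (1 + (t - t₀) * cr)) * dr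
          + Real.log (K * (1 + (t - t₀) * cr)) := by
    filter_upwards [hev] with t ht
    have h1c : (1 : ℂ) + ((t - t₀ : ℝ) : ℂ) * c = ((1 + (t - t₀) * cr : ℝ) : ℂ) := by
      rw [← hcr]; push_cast; ring
    have hne : (1 : ℂ) + ((t - t₀ : ℝ) : ℂ) * c ≠ 0 := by
      rw [h1c]
      exact_mod_cast ht.ne'
    have hq : ((t - t₀ : ℝ) : ℂ) / (1 + ((t - t₀ : ℝ) : ℂ) * c)
        = (((t - t₀) / (1 + (t - t₀) * cr) : ℝ) : ℂ) := by
      rw [h1c, Complex.ofReal_div]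
    rw [hrepr t, hinv _ hne, hdetf, Matrix.sub_mul, Matrix.smul_mul, trace_sub, trace_smul,
      htrd, hq, hdim, h1c, ← Complex.ofReal_mul]
    simp only [Complex.sub_re, smul_eq_mul, Complex.re_ofReal_mul, Complex.ofReal_re, hdrdef]
  -- derivative of the explicit formula
  have hd1 : HasDerivAt (fun t : ℝ => 1 + (t - t₀) * cr) cr t₀ := by
    simpa using (((hasDerivAt_id t₀).sub_const t₀).mul_const cr).const_add 1
  have hdiv : HasDerivAt (fun t : ℝ => (t - t₀) / (1 + (t - t₀) * cr)) 1 t₀ := by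
    have h2 : HasDerivAt (fun t : ℝ => t - t₀) 1 t₀ := (hasDerivAt_id t₀).sub_const t₀
    have := h2.div hd1 (by norm_num)
    exact this.congr_deriv (by simp)
  have hlog : HasDerivAt (fun t : ℝ => Real.log (K * (1 + (t - t₀) * cr))) cr t₀ := by
    have hK' : HasDerivAt (fun t : ℝ => K * (1 + (t - t₀) * cr)) (K * cr) t₀ :=
      hd1.const_mul K
    have h3 := hK'.log (by simp [hdre.ne'])
    have h4 : K * cr / K = cr := by
      field_simp
    simpa [h4] using h3
  have hg : HasDerivAt (fun t : ℝ =>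
      (trace (M * S)).re - ((t - t₀) / (1 + (t - t₀) * cr)) * dr
        + Real.log (K * (1 + (t - t₀) * cr))) (-dr + cr) t₀ := by
    have := ((hdiv.mul_const dr).const_sub ((trace (M * S)).re)).add hlog
    exact this.congr_deriv (by simp)
  have hval : (-d + c).re = -dr + cr := by
    simp [hdrdef, hcrdef]
  rw [show (-(star a ⬝ᵥ ((M * S * M) *ᵥ a)) + star a ⬝ᵥ (M *ᵥ a)).re = -dr + cr from hval]
  exact heq.hasDerivAt_iff.mpr hg
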